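/- Let K be a field, q ∈ K an invertible element with q² ≠ 1, p ≥ 2, and k = (k_1, …, k_p) ∈ ℤᵖ with m = Σ_{i=1}^p k_i. Define ξ_p(k_1,…,k_p) = Σ_{s=2}^p q^{k_1+⋯+k_s−m} · (k_s)_q · (k_1+⋯+k_{s−1})_q. Then ξ_p is a symmetric function of its arguments: for every permutation τ of {1,…,p}, ξ_p(k_{τ(1)},…,k_{τ(p)}) = ξ_p(k_1,…,k_p). -/
import Mathlib


/-- The q-number `n_q = (q^n - q^{-n})/(q - q⁻¹)`. -/
noncomputable def qnum {K : Type*} [Field K] (q : K) (n : ℤ) : K :=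
  (q ^ n - q ^ (-n)) / (q - q⁻¹)

lemma qnum_alg {K : Type*} [Field K] (u v w d : K) (hu : u ≠ 0) (hv : v ≠ 0) (hw : w ≠ 0)
    (hd : d ≠ 0) :
    (u * v / w) * ((u - u⁻¹) / d) * ((v - v⁻¹) / d) * d ^ 2
      = u ^ 2 * v ^ 2 / w - v ^ 2 / w + w⁻¹ - u ^ 2 / w := by
  field_simp
  ring

lemma term_formula {K : Type*} [Field K] (q : K) (hq0 : q ≠ 0) (hd : q - q⁻¹ ≠ 0) (a b m : ℤ) :
    q ^ (a + b - m) * qnum q a * qnum q b * (q - q⁻¹) ^ 2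
      = q ^ (2 * (a + b) - m) - q ^ (2 * b - m) + q ^ (-m) - q ^ (2 * a - m) := by
  have h1 : q ^ (a + b - m) = q ^ a * q ^ b / q ^ m := by
    rw [zpow_sub₀ hq0, zpow_add₀ hq0]
  have h2 : q ^ (2 * (a + b) - m) = (q ^ a) ^ 2 * (q ^ b) ^ 2 / q ^ m := by
    rw [zpow_sub₀ hq0, show 2 * (a + b) = (a + b) + (a + b) by ring, zpow_add₀ hq0,
      zpow_add₀ hq0]
    ring
  have h3 : q ^ (2 * b - m) = (q ^ b) ^ 2 / q ^ m := by
    rw [zpow_sub₀ hq0, show 2 * b = b + b by ring, zpow_add₀ hq0]; ring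
  have h4 : q ^ (2 * a - m) = (q ^ a) ^ 2 / q ^ m := by
    rw [zpow_sub₀ hq0, show 2 * a = a + a by ring, zpow_add₀ hq0]; ring
  have h5 : q ^ (-m) = (q ^ m)⁻¹ := zpow_neg q m
  rw [h1, h2, h3, h4, h5, qnum, qnum,
    zpow_neg q a, zpow_neg q b]
  exact qnum_alg _ _ _ _ (zpow_ne_zero a hq0) (zpow_ne_zero b hq0) (zpow_ne_zero m hq0) hd

/-- the function
`ξ_p(k_1,…,k_p) = Σ_{s=2}^p q^{k_1+⋯+k_s−m} (k_s)_q (k_1+⋯+k_{s−1})_q`,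
with `m = k_1 + ⋯ + k_p`, is symmetric in its arguments. -/
theorem xi_symmetric {K : Type*} [Field K] (q : K) (hq0 : q ≠ 0) (hq2 : q ^ 2 ≠ 1)
    {p : ℕ} (hp : 2 ≤ p)
    (ξ : (Fin p → ℤ) → K)
    (hξ : ∀ k : Fin p → ℤ,
      ξ k = ∑ s ∈ Finset.univ.filter (fun s : Fin p => 1 ≤ (s : ℕ)),
        q ^ ((∑ t ∈ Finset.Iic s, k t) - ∑ t, k t) * qnum q (k s)
          * qnum q (∑ t ∈ Finset.Iio s, k t)) :
    ∀ (k : Fin p → ℤ) (τ : Equiv.Perm (Fin p)), ξ (k ∘ τ) = ξ k := by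
  have hd : q - q⁻¹ ≠ 0 := by
    intro h
    apply hq2
    have hq : q = q⁻¹ := by rwa [sub_eq_zero] at h
    rw [pow_two]
    nth_rewrite 2 [hq]
    exact mul_inv_cancel₀ hq0
  have hd2 : (q - q⁻¹) ^ 2 ≠ 0 := pow_ne_zero 2 hd
  -- closed form
  have key : ∀ k : Fin p → ℤ, ξ k =
      (q ^ (∑ t, k t) + ((p : K) - 1) * q ^ (-(∑ t, k t))
        - ∑ s, q ^ (2 * k s - ∑ t, k t)) / (q - q⁻¹) ^ 2 := by
    intro k
    set m : ℤ := ∑ t, k t with hm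
    set k' : ℕ → ℤ := fun n => if h : n < p then k ⟨n, h⟩ else 0 with hk'
    set S : ℕ → ℤ := fun n => ∑ t ∈ Finset.range n, k' t with hS
    have hk'eq : ∀ s : Fin p, k' (s : ℕ) = k s := by
      intro s; simp [hk', s.isLt]
    have hIic : ∀ s : Fin p, ∑ t ∈ Finset.Iic s, k t = S ((s : ℕ) + 1) := by
      intro s
      refine Finset.sum_nbij' (fun t => (t : ℕ)) (fun n => ⟨n % p, Nat.mod_lt n (by omega)⟩)
        ?_ ?_ ?_ ?_ ?_
      · intro a ha
        simp only [Finset.mem_Iic] at ha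
        simp only [Finset.mem_range]
        omega
      · intro a ha
        simp only [Finset.mem_range] at ha
        simp only [Finset.mem_Iic]
        have hap : a < p := by omega
        have : a % p = a := Nat.mod_eq_of_lt hap
        simp only [Fin.le_def, this]
        omega
      · intro a _; ext; simp [Nat.mod_eq_of_lt a.isLt]
      · intro a ha
        simp only [Finset.mem_range] at ha
        simp [Nat.mod_eq_of_lt (show a < p by omega)]
      · intro a _
        have hap : (a : ℕ) < p := a.isLt
        simp [hk', hap]
    have hIio : ∀ s : Fin p, ∑ t ∈ Finset.Iio s, k t = S (s : ℕ) := by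
      intro s
      refine Finset.sum_nbij' (fun t => (t : ℕ)) (fun n => ⟨n % p, Nat.mod_lt n (by omega)⟩)
        ?_ ?_ ?_ ?_ ?_
      · intro a ha
        simp only [Finset.mem_Iio] at ha
        simp only [Finset.mem_range]
        exact ha
      · intro a ha
        simp only [Finset.mem_range] at ha
        have hap : a < p := lt_of_lt_of_le ha (le_of_lt s.isLt)
        simp only [Finset.mem_Iio, Fin.lt_def, Nat.mod_eq_of_lt hap]
        exact ha
      · intro a _; ext; simp [Nat.mod_eq_of_lt a.isLt]
      · intro a ha
        simp only [Finset.mem_range] at ha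
        have hap : a < p := lt_of_lt_of_le ha (le_of_lt s.isLt)
        simp [Nat.mod_eq_of_lt hap]
      · intro a _
        have hap : (a : ℕ) < p := a.isLt
        simp [hk', hap]
    have hSp : S p = m := by
      have h0 : S p = ∑ t ∈ Finset.range p, k' t := rfl
      rw [h0, ← Fin.sum_univ_eq_sum_range (fun n => k' n) p, hm]
      exact Finset.sum_congr rfl fun s _ => hk'eq s
    have hSsucc : ∀ n : ℕ, S (n + 1) = k' n + S n := by
      intro n
      rw [hS]
      simp [Finset.sum_range_succ]
      ring
    -- rewrite ξ k as a sum over Ico 1 p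
    have step1 : ξ k = ∑ s ∈ Finset.Ico 1 p,
        (q ^ (S (s + 1) - m) * qnum q (k' s) * qnum q (S s)) := by
      rw [hξ k, Finset.sum_filter]
      have : ∀ s : Fin p,
          (if 1 ≤ (s : ℕ) then
            q ^ ((∑ t ∈ Finset.Iic s, k t) - ∑ t, k t) * qnum q (k s)
              * qnum q (∑ t ∈ Finset.Iio s, k t) else 0)
          = (fun n => if 1 ≤ n then
              q ^ (S (n + 1) - m) * qnum q (k' n) * qnum q (S n) else 0) (s : ℕ) := by
        intro s
        simp only
        congr 1
        rw [hIic s, hIio s, hk'eq s, hm]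
      rw [Finset.sum_congr rfl fun s _ => this s,
        Fin.sum_univ_eq_sum_range (fun n => if 1 ≤ n then
          q ^ (S (n + 1) - m) * qnum q (k' n) * qnum q (S n) else 0) p,
        Finset.range_eq_Ico,
        Finset.sum_eq_sum_Ico_succ_bot (show 0 < p by omega)]
      rw [if_neg (by omega : ¬ (1:ℕ) ≤ 0), zero_add]
      refine Finset.sum_congr rfl fun n hn => ?_
      rw [Finset.mem_Ico] at hn
      rw [if_pos hn.1]
    -- multiply through by (q - q⁻¹)^2
    rw [step1, eq_div_iff hd2, Finset.sum_mul]
    have step2 : ∀ s ∈ Finset.Ico 1 p,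
        q ^ (S (s + 1) - m) * qnum q (k' s) * qnum q (S s) * (q - q⁻¹) ^ 2
          = (q ^ (2 * S (s + 1) - m) - q ^ (2 * S s - m))
            + (q ^ (-m) - q ^ (2 * k' s - m)) := by
      intro s _
      have := term_formula q hq0 hd (k' s) (S s) m
      rw [hSsucc s]
      rw [show k' s + S s - m = k' s + S s - m from rfl]
      calc q ^ (k' s + S s - m) * qnum q (k' s) * qnum q (S s) * (q - q⁻¹) ^ 2
          = q ^ (2 * (k' s + S s) - m) - q ^ (2 * S s - m) + q ^ (-m) - q ^ (2 * k' s - m) :=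
            this
        _ = (q ^ (2 * (k' s + S s)- m) - q ^ (2 * S s - m))
            + (q ^ (-m) - q ^ (2 * k' s - m)) := by ring
    rw [Finset.sum_congr rfl step2, Finset.sum_add_distrib]
    -- helper: sum over Ico 1 p equals sum over range p minus value at 0
    have hIco : ∀ h : ℕ → K, ∑ s ∈ Finset.Ico 1 p, h s = (∑ s ∈ Finset.range p, h s) - h 0 := by
      intro h
      have : ∑ s ∈ Finset.range p, h s = h 0 + ∑ s ∈ Finset.Ico 1 p, h s := by
        rw [Finset.range_eq_Ico]
        exact Finset.sum_eq_sum_Ico_succ_bot (by omega) h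
      rw [this]; ring
    have htel : ∑ s ∈ Finset.Ico 1 p, (q ^ (2 * S (s + 1) - m) - q ^ (2 * S s - m))
        = q ^ m - q ^ (2 * k' 0 - m) := by
      rw [hIco]
      rw [Finset.sum_range_sub (fun n => q ^ (2 * S n - m)) p]
      have hS0 : S 0 = 0 := by simp [hS]
      have hS1 : S 1 = k' 0 := by simp [hS]
      rw [hSp, hS0, hS1, show 2 * m - m = m by ring]
      ring
    have hrest : ∑ s ∈ Finset.Ico 1 p, (q ^ (-m) - q ^ (2 * k' s - m))
        = ((p : K) - 1) * q ^ (-m) - ((∑ s ∈ Finset.range p, q ^ (2 * k' s - m))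
            - q ^ (2 * k' 0 - m)) := by
      rw [Finset.sum_sub_distrib, Finset.sum_const, Nat.card_Ico, nsmul_eq_mul,
        hIco (fun s => q ^ (2 * k' s - m))]
      congr 1
      rw [Nat.cast_sub (by omega)]
      norm_num
    rw [htel, hrest]
    have hsum : ∑ s ∈ Finset.range p, q ^ (2 * k' s - m) = ∑ s, q ^ (2 * k s - m) := by
      rw [← Fin.sum_univ_eq_sum_range (fun n => q ^ (2 * k' n - m)) p]
      exact Finset.sum_congr rfl fun s _ => by rw [hk'eq s]
    rw [hsum]
    ring
  intro k τ
  rw [key (k ∘ τ), key k]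
  have h1 : ∑ t, (k ∘ τ) t = ∑ t, k t := Equiv.sum_comp τ k
  have h2 : ∑ s, q ^ (2 * (k ∘ τ) s - ∑ t, k t)
      = ∑ s, q ^ (2 * k s - ∑ t, k t) :=
    Equiv.sum_comp τ (fun s => q ^ (2 * k s - ∑ t, k t))
  rw [h1, h2]
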